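/- arXiv:math-ph/0504051 — 2 statements merged into one kernel-verified Lean document; each statement's English description precedes it below -/
import Mathlib

section
/- Let A, B, C be self-adjoint operators on a Hilbert space with A ≥ 0, B ≥ 1, C ≥ 1, and suppose B commutes with C. If A ≤ B and A ≤ C, then for all α, β ≥ 0 with α + β = 1, one has A ≤ B^α C^β. -/
open scoped NNReal
open Filter

private lemma my_scalar_aux {M r s t : ℝ} (hr : 1 ≤ r) (hrM : r ≤ M)
    (ht0 : 0 ≤ t) (ht1 : t ≤ 1) (hts : t ≤ s) :
    |r ^ s - r ^ t| ≤ M * (M ^ |s - t| - 1) := by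
  have hr0 : (0:ℝ) < r := by linarith
  have hM : 1 ≤ M := hr.trans hrM
  have h1 : r ^ s - r ^ t = r ^ t * (r ^ (s - t) - 1) := by
    rw [mul_sub, mul_one, ← Real.rpow_add hr0, add_sub_cancel]
  have h2 : r ^ t ≤ M := by
    calc r ^ t ≤ r ^ (1:ℝ) := Real.rpow_le_rpow_of_exponent_le hr ht1
    _ = r := Real.rpow_one r
    _ ≤ M := hrM
  have h3 : 1 ≤ r ^ (s - t) := by
    simpa using Real.rpow_le_rpow_of_exponent_le hr (sub_nonneg.2 hts)
  have h4 : r ^ (s - t) ≤ M ^ |s - t| := by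
    rw [abs_of_nonneg (sub_nonneg.2 hts)]
    exact Real.rpow_le_rpow (by linarith) hrM (sub_nonneg.2 hts)
  have ht' : 0 ≤ r ^ t := (Real.rpow_pos_of_pos hr0 t).le
  rw [h1, abs_of_nonneg (by nlinarith)]
  nlinarith

private lemma my_scalar_bound {M r s t : ℝ} (hr : 1 ≤ r) (hrM : r ≤ M) (hs0 : 0 ≤ s) (hs1 : s ≤ 1)
    (ht0 : 0 ≤ t) (ht1 : t ≤ 1) : |r ^ s - r ^ t| ≤ M * (M ^ |s - t| - 1) := by
  rcases le_total t s with h | h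
  · exact my_scalar_aux hr hrM ht0 ht1 h
  · rw [abs_sub_comm, abs_sub_comm s t]
    exact my_scalar_aux hr hrM hs0 hs1 h

section Main
variable {A : Type*} [CStarAlgebra A] [PartialOrder A] [StarOrderedRing A]

omit [PartialOrder A] [StarOrderedRing A] in
private lemma my_commute_cfc_real {b c : A} (hbc : Commute b c) (f : ℝ → ℝ) :
    Commute (cfc f b) c := by
  refine cfc_cases (fun x => Commute x c) b f (Commute.zero_left c) fun hf hb' => ?_
  have hcl : IsClosed {x : A | Commute x c} :=
    isClosed_eq (by fun_prop) (by fun_prop)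
  suffices H : ∀ g : C((spectrum ℝ b : Set ℝ), ℝ), Commute (cfcHom hb' g) c from H _
  intro g
  induction g using ContinuousMap.induction_on_of_compact with
  | const r =>
      have : (ContinuousMap.const (spectrum ℝ b) r)
          = algebraMap ℝ C((spectrum ℝ b : Set ℝ), ℝ) r := rfl
      rw [this, AlgHomClass.commutes]
      exact (Algebra.commute_algebraMap_left r c)
  | id => rw [cfcHom_id hb']; exact hbc
  | star_id =>
      rw [show star ((ContinuousMap.id ℝ).restrict (spectrum ℝ b))
          = ((ContinuousMap.id ℝ).restrict (spectrum ℝ b)) from by ext; simp]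
      rw [cfcHom_id hb']; exact hbc
  | add f₁ f₂ h₁ h₂ => rw [map_add]; exact h₁.add_left h₂
  | mul f₁ f₂ h₁ h₂ => rw [map_mul]; exact h₁.mul_left h₂
  | frequently g hg =>
      refine hcl.closure_subset ?_
      rw [mem_closure_iff_frequently]
      have hc2 := (cfcHom_isClosedEmbedding (R := ℝ) hb').continuous
      exact ((hc2.tendsto g).frequently hg :
        ∃ᶠ x in nhds (cfcHom hb' g), x ∈ {x : A | Commute x c})

private lemma my_commute_rpow {b c : A} (hbc : Commute b c) (s : ℝ) (hb : 0 ≤ b) :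
    Commute (CFC.rpow b s) c := by
  rw [show CFC.rpow b s = cfc (fun x : ℝ≥0 => x ^ s) b from rfl, cfc_nnreal_eq_real _ b hb]
  exact my_commute_cfc_real hbc _

private lemma my_one_le_spectrum {b : A} (hb1 : 1 ≤ b) {r : ℝ} (hr : r ∈ spectrum ℝ b) :
    1 ≤ r := by
  have h0 : 0 ≤ b - 1 := sub_nonneg.2 hb1
  have : r - 1 ∈ spectrum ℝ (b - algebraMap ℝ A 1) := by
    rw [← spectrum.sub_singleton_eq]
    exact Set.sub_mem_sub hr rfl
  rw [map_one] at this
  linarith [spectrum_nonneg_of_nonneg h0 this]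

private lemma my_rpow_norm_diff {b : A} (hb1 : 1 ≤ b) {s t : ℝ} (hs0 : 0 ≤ s) (hs1 : s ≤ 1)
    (ht0 : 0 ≤ t) (ht1 : t ≤ 1) :
    ‖CFC.rpow b s - CFC.rpow b t‖ ≤ (max ‖b‖ 1) * ((max ‖b‖ 1) ^ |s - t| - 1) := by
  set M : ℝ := max ‖b‖ 1 with hM
  have hM1 : (1:ℝ) ≤ M := le_max_right _ _
  have hMst : (1:ℝ) ≤ M ^ |s - t| := by
    simpa using Real.rpow_le_rpow_of_exponent_le hM1 (abs_nonneg (s - t))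
  have hRHS : 0 ≤ M * (M ^ |s - t| - 1) := by nlinarith
  have hb0 : (0:A) ≤ b := zero_le_one.trans hb1
  rcases subsingleton_or_nontrivial A with hsub | hnt
  · rw [Subsingleton.elim (CFC.rpow b s - CFC.rpow b t) 0, norm_zero]; exact hRHS
  have hcont : ∀ u : ℝ, 0 ≤ u → Continuous (fun x : ℝ => ((x.toNNReal ^ u : ℝ≥0) : ℝ)) := by
    intro u hu
    have : (fun x : ℝ => ((x.toNNReal ^ u : ℝ≥0) : ℝ)) = fun x : ℝ => (max x 0) ^ u := by
      ext x
      rw [NNReal.coe_rpow, Real.coe_toNNReal']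
    rw [this, continuous_iff_continuousAt]
    intro x
    exact ((continuous_id.max continuous_const).continuousAt).rpow_const (Or.inr hu)
  have hrw : ∀ u : ℝ, CFC.rpow b u = cfc (fun x : ℝ => ((x.toNNReal ^ u : ℝ≥0) : ℝ)) b := by
    intro u
    rw [show CFC.rpow b u = cfc (fun x : ℝ≥0 => x ^ u) b from rfl, cfc_nnreal_eq_real _ b hb0]
  rw [hrw s, hrw t, ← cfc_sub _ _ b ((hcont s hs0).continuousOn) ((hcont t ht0).continuousOn)]
  refine norm_cfc_le hRHS fun x hx => ?_
  have hx1 : 1 ≤ x := my_one_le_spectrum hb1 hx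
  have hxM : x ≤ M := by
    calc x ≤ |x| := le_abs_self x
    _ ≤ ‖b‖ := spectrum.norm_le_norm_of_mem hx
    _ ≤ M := le_max_left _ _
  have hcoe : ∀ u : ℝ, ((x.toNNReal ^ u : ℝ≥0) : ℝ) = x ^ u := by
    intro u
    rw [NNReal.coe_rpow, Real.coe_toNNReal _ (by linarith)]
  rw [hcoe s, hcoe t, Real.norm_eq_abs]
  exact my_scalar_bound hx1 hxM hs0 hs1 ht0 ht1

private lemma my_rpow_tendsto {b : A} (hb1 : 1 ≤ b) {u : ℕ → ℝ} {l : ℝ}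
    (h0 : ∀ n, 0 ≤ u n) (h1 : ∀ n, u n ≤ 1) (hl0 : 0 ≤ l) (hl1 : l ≤ 1)
    (hu : Tendsto u atTop (nhds l)) :
    Tendsto (fun n => CFC.rpow b (u n)) atTop (nhds (CFC.rpow b l)) := by
  rw [tendsto_iff_norm_sub_tendsto_zero]
  have hM1 : (1:ℝ) ≤ max ‖b‖ 1 := le_max_right _ _
  have habs : Tendsto (fun n => |u n - l|) atTop (nhds 0) := by
    have h := (hu.sub_const l).abs
    simpa using h
  have hconv : Tendsto (fun n => (max ‖b‖ 1) * ((max ‖b‖ 1) ^ |u n - l| - 1)) atTop (nhds 0) := by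
    have hc : ContinuousAt (fun x : ℝ => (max ‖b‖ 1) * ((max ‖b‖ 1) ^ x - 1)) 0 := by
      have hc1 : ContinuousAt (fun x : ℝ => (max ‖b‖ 1) ^ x) 0 :=
        Real.continuousAt_const_rpow (by linarith)
      exact continuousAt_const.mul (hc1.sub continuousAt_const)
    have h2 := hc.tendsto.comp habs
    simpa [Function.comp_def, Real.rpow_zero] using h2
  refine squeeze_zero (fun n => norm_nonneg _) (fun n => ?_) hconv
  exact my_rpow_norm_diff hb1 (h0 n) (h1 n) hl0 hl1

theorem my_interp {a b c : A} (ha : 0 ≤ a) (hb1 : 1 ≤ b) (hc1 : 1 ≤ c) (hbc : Commute b c)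
    (hab : a ≤ b) (hac : a ≤ c) {α β : ℝ} (hα : 0 ≤ α) (hβ : 0 ≤ β) (hαβ : α + β = 1) :
    a ≤ CFC.rpow b α * CFC.rpow c β := by
  obtain rfl : β = 1 - α := by linarith
  have hα1 : α ≤ 1 := by linarith
  have hb0 : (0:A) ≤ b := zero_le_one.trans hb1
  have hc0 : (0:A) ≤ c := zero_le_one.trans hc1
  have hbu : IsUnit b := CStarAlgebra.isUnit_of_le 1 hb1
  have hcu : IsUnit c := CStarAlgebra.isUnit_of_le 1 hc1
  have hbs : 0 ∉ spectrum ℝ≥0 b := spectrum.zero_notMem ℝ≥0 hbu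
  have hcs : 0 ∉ spectrum ℝ≥0 c := spectrum.zero_notMem ℝ≥0 hcu
  have hK : ∀ x y : ℝ, Commute (CFC.rpow b x) (CFC.rpow c y) := fun x y =>
    my_commute_rpow ((my_commute_rpow hbc.symm y hc0).symm) x hb0
  have hbadd : ∀ x y : ℝ, CFC.rpow b (x + y) = CFC.rpow b x * CFC.rpow b y :=
    fun x y => CFC.rpow_add hbu
  have hcadd : ∀ x y : ℝ, CFC.rpow c (x + y) = CFC.rpow c x * CFC.rpow c y :=
    fun x y => CFC.rpow_add hcu
  have hbz : CFC.rpow b 0 = 1 := CFC.rpow_zero b hb0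
  have hcz : CFC.rpow c 0 = 1 := CFC.rpow_zero c hc0
  have hbo : CFC.rpow b 1 = b := CFC.rpow_one b hb0
  have hco : CFC.rpow c 1 = c := CFC.rpow_one c hc0
  have hbsa : ∀ x : ℝ, star (CFC.rpow b x) = CFC.rpow b x := fun x =>
    (IsSelfAdjoint.of_nonneg (CFC.rpow_nonneg : 0 ≤ CFC.rpow b x)).star_eq
  have hcsa : ∀ x : ℝ, star (CFC.rpow c x) = CFC.rpow c x := fun x =>
    (IsSelfAdjoint.of_nonneg (CFC.rpow_nonneg : 0 ≤ CFC.rpow c x)).star_eq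
  have hmul : ∀ x y u v : ℝ, (CFC.rpow b x * CFC.rpow c y) * (CFC.rpow b u * CFC.rpow c v)
      = CFC.rpow b (x + u) * CFC.rpow c (y + v) := by
    intro x y u v
    rw [hbadd, hcadd, (hK u y).symm.mul_mul_mul_comm]
  set D : ℝ → A := fun s => CFC.rpow b s * CFC.rpow c (1 - s) with hD
  set E : ℝ → A := fun s => CFC.rpow b (-(s/2)) * CFC.rpow c (-((1-s)/2)) with hE
  set G : ℝ → A := fun s => CFC.rpow b (s/2) * CFC.rpow c ((1-s)/2) with hG
  have hone : CFC.rpow b 0 * CFC.rpow c 0 = 1 := by rw [hbz, hcz, one_mul]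
  have hGE : ∀ s, G s * E s = 1 := by
    intro s
    simp only [hG, hE]
    rw [hmul, show s/2 + -(s/2) = 0 by ring, show (1-s)/2 + -((1-s)/2) = 0 by ring, hone]
  have hEG : ∀ s, E s * G s = 1 := by
    intro s
    simp only [hG, hE]
    rw [hmul, show -(s/2) + s/2 = 0 by ring, show -((1-s)/2) + (1-s)/2 = 0 by ring, hone]
  have hED : ∀ s, E s * D s * E s = 1 := by
    intro s
    simp only [hG, hE, hD]
    rw [hmul, hmul, show -(s/2) + s + -(s/2) = 0 by ring,
      show -((1-s)/2) + (1-s) + -((1-s)/2) = 0 by ring, hone]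
  have hsaE : ∀ s, IsSelfAdjoint (E s) := by
    intro s
    simp only [hE, IsSelfAdjoint, star_mul, hbsa, hcsa]
    exact ((hK _ _).symm).eq
  have hsaG : ∀ s, IsSelfAdjoint (G s) := by
    intro s
    simp only [hG, IsSelfAdjoint, star_mul, hbsa, hcsa]
    exact ((hK _ _).symm).eq
  set sq : A := CFC.sqrt a with hsqdef
  have hsq : sq * sq = a := CFC.sqrt_mul_sqrt_self a ha
  have hsqsa : IsSelfAdjoint sq := IsSelfAdjoint.of_nonneg (CFC.sqrt_nonneg a)
  have hstar : ∀ s, star (sq * E s) = E s * sq := by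
    intro s; rw [star_mul, (hsaE s).star_eq, hsqsa.star_eq]
  have hEaE : ∀ s, star (sq * E s) * (sq * E s) = E s * a * E s := by
    intro s
    rw [hstar, ← hsq]
    noncomm_ring
  have char1 : ∀ s, a ≤ D s → ‖sq * E s‖ ≤ 1 := by
    intro s h
    have h1 : E s * a * E s ≤ 1 := by
      have h2 := star_left_conjugate_le_conjugate h (E s)
      rw [(hsaE s).star_eq] at h2
      exact h2.trans_eq (hED s)
    have h2 : (0:A) ≤ E s * a * E s := by
      have := star_left_conjugate_nonneg ha (E s)
      rwa [(hsaE s).star_eq] at this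
    have h3 : ‖E s * a * E s‖ ≤ 1 := (CStarAlgebra.norm_le_one_iff_of_nonneg _ h2).mpr h1
    rw [← hEaE s, CStarRing.norm_star_mul_self] at h3
    nlinarith [norm_nonneg (sq * E s)]
  have char2 : ∀ s, ‖sq * E s‖ ≤ 1 → a ≤ D s := by
    intro s h
    have h2 : (0:A) ≤ E s * a * E s := by
      have := star_left_conjugate_nonneg ha (E s)
      rwa [(hsaE s).star_eq] at this
    have h3 : ‖E s * a * E s‖ ≤ 1 := by
      rw [← hEaE s, CStarRing.norm_star_mul_self]
      nlinarith [norm_nonneg (sq * E s)]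
    have h1 : E s * a * E s ≤ 1 := (CStarAlgebra.norm_le_one_iff_of_nonneg _ h2).mp h3
    have h4 := star_left_conjugate_le_conjugate h1 (G s)
    rw [(hsaG s).star_eq, mul_one] at h4
    have h5 : G s * (E s * a * E s) * G s = a := by
      have h6 : G s * (E s * a * E s) * G s = (G s * E s) * a * (E s * G s) := by noncomm_ring
      rw [h6, hGE, hEG, one_mul, mul_one]
    have h7 : G s * G s = D s := by
      simp only [hG, hD]
      rw [hmul, show s/2 + s/2 = s by ring, show (1-s)/2 + (1-s)/2 = 1 - s by ring]
    rw [h5, h7] at h4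
    exact h4
  have hmid : ∀ s t, ‖sq * E s‖ ≤ 1 → ‖sq * E t‖ ≤ 1 → ‖sq * E ((s+t)/2)‖ ≤ 1 := by
    intro s t hs ht
    have hEE : E ((s+t)/2) * E ((s+t)/2) = E s * E t := by
      simp only [hE]
      rw [hmul, hmul, show -(((s+t)/2)/2) + -(((s+t)/2)/2) = -(s/2) + -(t/2) by ring,
        show -((1-(s+t)/2)/2) + -((1-(s+t)/2)/2) = -((1-s)/2) + -((1-t)/2) by ring]
    have h1 : (sq * E ((s+t)/2)) * star (sq * E ((s+t)/2)) = (sq * E s) * (E t * sq) := by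
      rw [hstar]
      calc sq * E ((s+t)/2) * (E ((s+t)/2) * sq)
          = sq * (E ((s+t)/2) * E ((s+t)/2)) * sq := by noncomm_ring
        _ = sq * (E s * E t) * sq := by rw [hEE]
        _ = (sq * E s) * (E t * sq) := by noncomm_ring
    have h2 : ‖sq * E ((s+t)/2)‖ * ‖sq * E ((s+t)/2)‖ ≤ ‖sq * E s‖ * ‖E t * sq‖ := by
      rw [← CStarRing.norm_self_mul_star, h1]
      exact norm_mul_le _ _
    have h3 : ‖E t * sq‖ = ‖sq * E t‖ := by
      rw [← hstar t, norm_star]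
    rw [h3] at h2
    nlinarith [norm_nonneg (sq * E ((s+t)/2)), norm_nonneg (sq * E s), norm_nonneg (sq * E t)]
  have hstep : ∀ s t, a ≤ D s → a ≤ D t → a ≤ D ((s+t)/2) :=
    fun s t hs ht => char2 _ (hmid s t (char1 s hs) (char1 t ht))
  have hP0 : a ≤ D 0 := by
    simp only [hD]
    rw [show (1:ℝ) - 0 = 1 by norm_num, hbz, hco, one_mul]
    exact hac
  have hP1 : a ≤ D 1 := by
    simp only [hD]
    rw [show (1:ℝ) - 1 = 0 by norm_num, hcz, hbo, mul_one]
    exact hab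
  have hdy : ∀ n : ℕ, ∀ k : ℕ, k ≤ 2^n → a ≤ D ((k : ℝ)/2^n) := by
    intro n
    induction n with
    | zero =>
        intro k hk
        interval_cases k
        · simpa using hP0
        · simpa using hP1
    | succ n ih =>
        intro k hk
        rcases Nat.even_or_odd k with ⟨j, hj⟩ | ⟨j, hj⟩
        · have hj' : j ≤ 2^n := by
            have h := hk; rw [pow_succ] at h; omega
          have heq : ((k : ℝ))/2^(n+1) = (((j:ℝ)/2^n) + ((j:ℝ)/2^n))/2 := by
            subst hj; push_cast; rw [pow_succ]; field_simp; try ring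
          rw [heq]
          exact hstep _ _ (ih j hj') (ih j hj')
        · have hj' : j ≤ 2^n := by
            have h := hk; rw [pow_succ] at h; omega
          have hj'' : j + 1 ≤ 2^n := by
            have h := hk; rw [pow_succ] at h; omega
          have heq : ((k : ℝ))/2^(n+1) = (((j:ℝ)/2^n) + (((j:ℝ)+1)/2^n))/2 := by
            subst hj; push_cast; rw [pow_succ]; field_simp; try ring
          rw [heq]
          refine hstep _ _ (ih j hj') ?_
          have h := ih (j+1) hj''
          push_cast at h
          exact h
  -- pass to the limit along dyadic approximations of α
  set sn : ℕ → ℝ := fun n => ((⌊α * 2^n⌋₊ : ℕ) : ℝ) / 2^n with hsn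
  have h2n : ∀ n : ℕ, (0:ℝ) < 2^n := fun n => by positivity
  have hfl_le : ∀ n, ((⌊α * 2^n⌋₊ : ℕ):ℝ) ≤ α * 2^n := fun n => Nat.floor_le (by positivity)
  have hfl_gt : ∀ n, α * 2^n < ((⌊α * 2^n⌋₊ : ℕ):ℝ) + 1 := fun n => Nat.lt_floor_add_one _
  have hk_le : ∀ n, ⌊α * 2^n⌋₊ ≤ 2^n := by
    intro n
    have hle : α * 2^n ≤ ((2^n : ℕ) : ℝ) := by
      push_cast
      nlinarith [h2n n]
    calc ⌊α * 2^n⌋₊ ≤ ⌊((2^n:ℕ):ℝ)⌋₊ := Nat.floor_mono hle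
      _ = 2^n := Nat.floor_natCast _
  have hsn0 : ∀ n, 0 ≤ sn n := fun n => by simp only [hsn]; positivity
  have hsn1 : ∀ n, sn n ≤ 1 := by
    intro n
    simp only [hsn]
    rw [div_le_one (h2n n)]
    exact_mod_cast hk_le n
  have hpow1 : ∀ n : ℕ, (1/2:ℝ)^n * 2^n = 1 := by
    intro n; rw [← mul_pow]; norm_num
  have hsnd : ∀ n, |sn n - α| ≤ (1/2:ℝ)^n := by
    intro n
    have hhigh : sn n ≤ α := by
      simp only [hsn]
      rw [div_le_iff₀ (h2n n)]
      exact hfl_le n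
    have hlow : α - (1/2:ℝ)^n ≤ sn n := by
      simp only [hsn]
      rw [le_div_iff₀ (h2n n)]
      nlinarith [hfl_gt n, hpow1 n]
    rw [abs_le]
    constructor <;> [linarith; linarith [pow_nonneg (by norm_num : (0:ℝ) ≤ 1/2) n]]
  have htendabs : Tendsto (fun n => |sn n - α|) atTop (nhds 0) :=
    squeeze_zero (fun n => abs_nonneg _) hsnd
      (tendsto_pow_atTop_nhds_zero_of_lt_one (by norm_num) (by norm_num))
  have hsn_tend : Tendsto sn atTop (nhds α) := by
    rw [tendsto_iff_norm_sub_tendsto_zero]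
    simpa [Real.norm_eq_abs] using htendabs
  have hbn := my_rpow_tendsto hb1 hsn0 hsn1 hα hα1 hsn_tend
  have hcn : Tendsto (fun n => CFC.rpow c (1 - sn n)) atTop (nhds (CFC.rpow c (1 - α))) :=
    my_rpow_tendsto hc1 (fun n => by linarith [hsn1 n]) (fun n => by linarith [hsn0 n])
      (by linarith) (by linarith) (tendsto_const_nhds.sub hsn_tend)
  have hDt : Tendsto (fun n => D (sn n) - a) atTop (nhds (D α - a)) := by
    simp only [hD]
    exact (hbn.mul hcn).sub tendsto_const_nhds
  have hmem : ∀ n, D (sn n) - a ∈ {x : A | 0 ≤ x} := by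
    intro n
    exact Set.mem_setOf.mpr (sub_nonneg.2 (hdy n ⌊α * 2^n⌋₊ (hk_le n)))
  have hfin : D α - a ∈ {x : A | 0 ≤ x} :=
    CStarAlgebra.isClosed_nonneg.mem_of_tendsto hDt (Filter.Eventually.of_forall hmem)
  have hfinal : a ≤ D α := sub_nonneg.1 hfin
  simpa only [hD] using hfinal

end Main

/-- **Operator interpolation inequality.**
Let `A, B, C` be self-adjoint (bounded) operators on a complex Hilbert space with
`A ≥ 0`, `B ≥ 1`, `C ≥ 1`, and suppose `B` commutes with `C`.  If `A ≤ B` and `A ≤ C`,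
then for all `α, β ≥ 0` with `α + β = 1` one has `A ≤ B^α * C^β`, where the real powers
are defined by the continuous functional calculus.  The order is the Loewner order. -/
theorem stmt0
    {E : Type*} [NormedAddCommGroup E] [InnerProductSpace ℂ E] [CompleteSpace E]
    (A B C : E →L[ℂ] E)
    (hA : IsSelfAdjoint A) (hB : IsSelfAdjoint B) (hC : IsSelfAdjoint C)
    (hA0 : 0 ≤ A) (hB1 : 1 ≤ B) (hC1 : 1 ≤ C)
    (hBC : Commute B C)
    (hAB : A ≤ B) (hAC : A ≤ C)
    (α β : ℝ) (hα : 0 ≤ α) (hβ : 0 ≤ β) (hαβ : α + β = 1) :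
    A ≤ CFC.rpow B α * CFC.rpow C β := by
  exact my_interp hA0 hB1 hC1 hBC hAB hAC hα hβ hαβ
end

section
/- Let φ ∈ H¹(ℝ³) and define φ^κ = exp(−κ|p|/N) φ for κ, N > 0. Then ‖φ^κ‖_{L²} ≤ ‖φ‖_{L²}, and for every integer k ≥ 2 there is a constant C^k (with C universal) such that ⟨φ^κ, (1+p²)^{k/2} φ^κ⟩ ≤ C^k (1 + k! (N/κ)^{k−2}) ‖φ‖_{H¹}². -/
open MeasureTheory

lemma pow_mul_exp_neg_le (m : ℕ) (a r : ℝ) (ha : 0 < a) (hr : 0 ≤ r) :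
    r ^ m * Real.exp (-(a * r)) ≤ (Nat.factorial m : ℝ) / a ^ m := by
  have h1 : (a * r) ^ m / (Nat.factorial m : ℝ) ≤ Real.exp (a * r) := by
    calc (a * r) ^ m / (Nat.factorial m : ℝ)
        ≤ ∑ i ∈ Finset.range (m + 1), (a * r) ^ i / (Nat.factorial i : ℝ) := by
          exact Finset.single_le_sum (f := fun i => (a * r) ^ i / (Nat.factorial i : ℝ))
            (fun i _ => by positivity) (Finset.self_mem_range_succ m)
      _ ≤ Real.exp (a * r) := Real.sum_le_exp_of_nonneg (by positivity) _
  have hfac : (0:ℝ) < Nat.factorial m := by positivity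
  have h2 : a ^ m * r ^ m ≤ (Nat.factorial m : ℝ) * Real.exp (a * r) := by
    have := (div_le_iff₀ hfac).mp h1
    calc a ^ m * r ^ m = (a * r) ^ m := (mul_pow a r m).symm
      _ ≤ Real.exp (a * r) * (Nat.factorial m : ℝ) := this
      _ = (Nat.factorial m : ℝ) * Real.exp (a * r) := mul_comm _ _
  have hexp : (0:ℝ) < Real.exp (a * r) := Real.exp_pos _
  rw [Real.exp_neg, mul_inv_le_iff₀ hexp, div_mul_eq_mul_div, le_div_iff₀ (pow_pos ha m)]
  nlinarith [h2]

lemma key_pointwise (k : ℕ) (hk : 2 ≤ k) (κ N r : ℝ) (hκ : 0 < κ) (hN : 0 < N) (hr : 0 ≤ r) :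
    (1 + r ^ 2) ^ ((k : ℝ) / 2) * Real.exp (-2 * κ * r / N)
      ≤ 2 ^ k * (1 + (Nat.factorial k : ℝ) * (N / κ) ^ (k - 2)) * (1 + r ^ 2) := by
  set m := k - 2 with hm
  have hkm : k = m + 2 := by omega
  set E := Real.exp (-2 * κ * r / N) with hE
  have hE0 : 0 < E := Real.exp_pos _
  have hE1 : E ≤ 1 := by
    rw [hE]
    apply Real.exp_le_one_iff.mpr
    apply div_nonpos_of_nonpos_of_nonneg (by nlinarith) hN.le
  have h1p : (0:ℝ) ≤ 1 + r ^ 2 := by positivity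
  -- step 1
  have step1 : (1 + r ^ 2) ^ ((k : ℝ) / 2) ≤ (1 + r) ^ k := by
    have hsq : (1 + r ^ 2) ^ ((1:ℝ) / 2) ≤ 1 + r := by
      rw [← Real.sqrt_eq_rpow]
      have : Real.sqrt (1 + r ^ 2) ≤ Real.sqrt ((1 + r) ^ 2) :=
        Real.sqrt_le_sqrt (by nlinarith)
      rwa [Real.sqrt_sq (by linarith)] at this
    have : (1 + r ^ 2) ^ ((k : ℝ) / 2) = ((1 + r ^ 2) ^ ((1:ℝ) / 2)) ^ k := by
      rw [← Real.rpow_natCast ((1 + r ^ 2) ^ ((1:ℝ)/2)) k, ← Real.rpow_mul h1p]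
      ring_nf
    rw [this]
    exact pow_le_pow_left₀ (by positivity) hsq k
  -- step 2
  have step2 : r ^ m * E ≤ (Nat.factorial k : ℝ) * (N / κ) ^ m := by
    have ha : 0 < 2 * κ / N := by positivity
    have h := pow_mul_exp_neg_le m (2 * κ / N) r ha hr
    have harg : -(2 * κ / N * r) = -2 * κ * r / N := by ring
    rw [harg] at h
    refine h.trans ?_
    rw [div_eq_mul_inv, ← inv_pow, inv_div]
    have hf : (Nat.factorial m : ℝ) ≤ (Nat.factorial k : ℝ) := by
      exact_mod_cast Nat.factorial_le (by omega)
    have hb : (N / (2 * κ)) ^ m ≤ (N / κ) ^ m := by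
      apply pow_le_pow_left₀ (by positivity)
      apply div_le_div_of_nonneg_left hN.le hκ (by linarith)
    have h0 : (0:ℝ) ≤ (N / (2 * κ)) ^ m := by positivity
    calc (Nat.factorial m : ℝ) * (N / (2 * κ)) ^ m
        ≤ (Nat.factorial k : ℝ) * (N / (2 * κ)) ^ m := mul_le_mul_of_nonneg_right hf h0
      _ ≤ (Nat.factorial k : ℝ) * (N / κ) ^ m := by
          apply mul_le_mul_of_nonneg_left hb (by positivity)
  -- step 3
  have step3 : (1 + r) ^ m ≤ 2 ^ m * (1 + r ^ m) := by
    rcases le_total r 1 with h | h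
    · calc (1 + r) ^ m ≤ 2 ^ m := pow_le_pow_left₀ (by linarith) (by linarith) m
        _ ≤ 2 ^ m * (1 + r ^ m) := by nlinarith [pow_nonneg hr m, pow_pos (zero_lt_two (α := ℝ)) m]
    · calc (1 + r) ^ m ≤ (2 * r) ^ m := pow_le_pow_left₀ (by linarith) (by linarith) m
        _ = 2 ^ m * r ^ m := mul_pow 2 r m
        _ ≤ 2 ^ m * (1 + r ^ m) := by nlinarith [pow_pos (zero_lt_two (α := ℝ)) m]
  have step4 : (1 + r) ^ 2 ≤ 2 * (1 + r ^ 2) := by nlinarith [sq_nonneg (1 - r)]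
  set Q : ℝ := 1 + (Nat.factorial k : ℝ) * (N / κ) ^ m with hQ
  have hQ1 : 1 ≤ Q := by
    rw [hQ]
    have : (0:ℝ) ≤ (Nat.factorial k : ℝ) * (N / κ) ^ m := by positivity
    linarith
  have step5 : (1 + r) ^ m * E ≤ 2 ^ m * Q := by
    calc (1 + r) ^ m * E ≤ 2 ^ m * (1 + r ^ m) * E :=
          mul_le_mul_of_nonneg_right step3 hE0.le
      _ = 2 ^ m * (E + r ^ m * E) := by ring
      _ ≤ 2 ^ m * (1 + (Nat.factorial k : ℝ) * (N / κ) ^ m) := by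
          apply mul_le_mul_of_nonneg_left _ (by positivity)
          linarith [step2]
  calc (1 + r ^ 2) ^ ((k : ℝ) / 2) * E
      ≤ (1 + r) ^ k * E := mul_le_mul_of_nonneg_right step1 hE0.le
    _ = (1 + r) ^ 2 * ((1 + r) ^ m * E) := by rw [hkm]; ring
    _ ≤ (2 * (1 + r ^ 2)) * (2 ^ m * Q) := by
        apply mul_le_mul step4 step5 (by positivity) (by positivity)
    _ = 2 ^ (m + 1) * Q * (1 + r ^ 2) := by ring
    _ ≤ 2 ^ k * Q * (1 + r ^ 2) := by
        apply mul_le_mul_of_nonneg_right _ h1p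
        apply mul_le_mul_of_nonneg_right _ (by linarith)
        apply pow_le_pow_right₀ one_le_two (by omega)


/-- Bounds on the regularized wave function `φ^κ = e^{−κ|p|/N} φ`, stated on the Fourier
side (by Plancherel): here `f = φ̂`, so `‖φ^κ‖² = ∫ e^{−2κ|ξ|/N}|f|²`,
`⟨φ^κ,(1+p²)^{k/2}φ^κ⟩ = ∫ (1+|ξ|²)^{k/2} e^{−2κ|ξ|/N} |f|²` and
`‖φ‖_{H¹}² = ∫ (1+|ξ|²)|f|²`.  There is a universal constant `C` such that
`‖φ^κ‖ ≤ ‖φ‖` and, for every `k ≥ 2`,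
`⟨φ^κ,(1+p²)^{k/2}φ^κ⟩ ≤ C^k (1 + k! (N/κ)^{k−2}) ‖φ‖_{H¹}²`. -/
theorem stmt4 :
    ∃ C : ℝ, 0 < C ∧
      ∀ (κ N : ℝ), 0 < κ → 0 < N →
        ∀ f : EuclideanSpace ℝ (Fin 3) → ℂ,
          AEStronglyMeasurable f volume →
          Integrable (fun ξ => (1 + ‖ξ‖ ^ 2) * ‖f ξ‖ ^ 2) →
          (∫ ξ, Real.exp (-2 * κ * ‖ξ‖ / N) * ‖f ξ‖ ^ 2) ≤ (∫ ξ, ‖f ξ‖ ^ 2) ∧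
          ∀ k : ℕ, 2 ≤ k →
            (∫ ξ, (1 + ‖ξ‖ ^ 2) ^ ((k : ℝ) / 2) * Real.exp (-2 * κ * ‖ξ‖ / N) * ‖f ξ‖ ^ 2)
              ≤ C ^ k * (1 + (Nat.factorial k : ℝ) * (N / κ) ^ (k - 2)) *
                  (∫ ξ, (1 + ‖ξ‖ ^ 2) * ‖f ξ‖ ^ 2) := by
  refine ⟨2, two_pos, fun κ N hκ hN f hf hInt => ?_⟩
  have hexp1 : ∀ ξ : EuclideanSpace ℝ (Fin 3), Real.exp (-2 * κ * ‖ξ‖ / N) ≤ 1 := by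
    intro ξ
    apply Real.exp_le_one_iff.mpr
    apply div_nonpos_of_nonpos_of_nonneg (by nlinarith [norm_nonneg ξ]) hN.le
  have hmeas : AEStronglyMeasurable (fun ξ : EuclideanSpace ℝ (Fin 3) => ‖f ξ‖ ^ 2) volume := by
    exact hf.norm.pow 2
  have hInt2 : Integrable (fun ξ : EuclideanSpace ℝ (Fin 3) => ‖f ξ‖ ^ 2) := by
    refine hInt.mono' hmeas (Filter.Eventually.of_forall fun ξ => ?_)
    have h1 : (0:ℝ) ≤ ‖f ξ‖ ^ 2 := by positivity
    rw [Real.norm_of_nonneg h1]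
    nlinarith [sq_nonneg ‖ξ‖]
  constructor
  · apply integral_mono_of_nonneg
    · exact Filter.Eventually.of_forall fun ξ => by positivity
    · exact hInt2
    · exact Filter.Eventually.of_forall fun ξ => by
        nlinarith [hexp1 ξ, sq_nonneg ‖f ξ‖, Real.exp_pos (-2 * κ * ‖ξ‖ / N)]
  · intro k hk
    have hpt : ∀ ξ : EuclideanSpace ℝ (Fin 3),
        (1 + ‖ξ‖ ^ 2) ^ ((k : ℝ) / 2) * Real.exp (-2 * κ * ‖ξ‖ / N) * ‖f ξ‖ ^ 2
          ≤ (2 ^ k * (1 + (Nat.factorial k : ℝ) * (N / κ) ^ (k - 2))) *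
              ((1 + ‖ξ‖ ^ 2) * ‖f ξ‖ ^ 2) := by
      intro ξ
      have h := mul_le_mul_of_nonneg_right
        (key_pointwise k hk κ N ‖ξ‖ hκ hN (norm_nonneg ξ))
        (by positivity : (0:ℝ) ≤ ‖f ξ‖ ^ 2)
      exact h.trans_eq (by ring)
    calc (∫ ξ, (1 + ‖ξ‖ ^ 2) ^ ((k : ℝ) / 2) * Real.exp (-2 * κ * ‖ξ‖ / N) * ‖f ξ‖ ^ 2)
        ≤ ∫ ξ, (2 ^ k * (1 + (Nat.factorial k : ℝ) * (N / κ) ^ (k - 2))) *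
            ((1 + ‖ξ‖ ^ 2) * ‖f ξ‖ ^ 2) := by
          apply integral_mono_of_nonneg
          · exact Filter.Eventually.of_forall fun ξ => by positivity
          · exact hInt.const_mul _
          · exact Filter.Eventually.of_forall hpt
      _ = (2:ℝ) ^ k * (1 + (Nat.factorial k : ℝ) * (N / κ) ^ (k - 2)) *
            (∫ ξ, (1 + ‖ξ‖ ^ 2) * ‖f ξ‖ ^ 2) := MeasureTheory.integral_const_mul _ _
end
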